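/- Let a, b, c, d be positive integers and consider the pair (X, Oz) associated to the real surface V = {(x,y,z) ∈ ℝ³ : y^a = z^b·x^c + x^d}. Define, for (x,z) ∈ ℝ² with x ≠ 0 and such that z^b·x^c + x^d has a real a-th root (i.e. a is odd or z^b·x^c + x^d ≥ 0), Z'(x,z) = |z^{b−1}·x^c| / ( max(|c·x^{c−1}·z^b + d·x^{d−1}|, |z^b·x^c + x^d|^{(a−1)/a}) · max(|x|, |z^b·x^c + x^d|^{1/a}) ). Then (X, Oz) is Kuo–Verdier (w)-regular at the origin if and only if Z' is bounded on a neighbourhood of the origin, i.e. there exist M > 0 and ε > 0 such that Z'(x,z) ≤ M for all such (x,z) with ‖(x,z)‖ < ε. -/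
import Mathlib


open Filter

noncomputable section

/-- x-partial derivative of f(x,y,z) = y^a - z^b*x^c - x^d. -/
def fxR (b c d : ℕ) (x z : ℝ) : ℝ :=
  -(c : ℝ) * z ^ b * x ^ (c - 1) - (d : ℝ) * x ^ (d - 1)

/-- y-partial derivative of f. -/
def fyR (a : ℕ) (y : ℝ) : ℝ := (a : ℝ) * y ^ (a - 1)

/-- z-partial derivative of f. -/
def fzR (b c : ℕ) (x z : ℝ) : ℝ := -(b : ℝ) * z ^ (b - 1) * x ^ c

/-- Euclidean norm on ℝ³. -/
def nrm3R (u v w : ℝ) : ℝ := Real.sqrt (u ^ 2 + v ^ 2 + w ^ 2)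

/-- Euclidean norm on ℝ². -/
def nrm2R (u v : ℝ) : ℝ := Real.sqrt (u ^ 2 + v ^ 2)

/-- Norm of the gradient ∇f(x,y,z). -/
def gradNormR (a b c d : ℕ) (x y z : ℝ) : ℝ :=
  nrm3R (fxR b c d x z) (fyR a y) (fzR b c x z)

/-- The gradient ∇f(x,y,z) is nonzero. -/
def gradNeR (a b c d : ℕ) (x y z : ℝ) : Prop :=
  ¬ (fxR b c d x z = 0 ∧ fyR a y = 0 ∧ fzR b c x z = 0)

/-- Membership in X = V \ Oz, where V = {y^a = z^b x^c + x^d} and Oz is the z-axis. -/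
def inXR (a b c d : ℕ) (x y z : ℝ) : Prop :=
  y ^ a = z ^ b * x ^ c + x ^ d ∧ ¬ (x = 0 ∧ y = 0)

/-- Whitney (a)-regularity of the pair (X, Oz) at the origin. -/
def aRegR (a b c d : ℕ) : Prop :=
  ∀ x y z : ℕ → ℝ,
    (∀ n, inXR a b c d (x n) (y n) (z n)) →
    Tendsto (fun n => (x n, y n, z n)) atTop (nhds ((0 : ℝ), (0 : ℝ), (0 : ℝ))) →
    (∀ n, gradNeR a b c d (x n) (y n) (z n)) →
    Tendsto (fun n => |fzR b c (x n) (z n)| / gradNormR a b c d (x n) (y n) (z n))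
      atTop (nhds 0)

/-- The (bᵖⁱ) condition for the retraction π(x,y,z) = (0,0,z). -/
def bpiR (a b c d : ℕ) : Prop :=
  ∀ x y z : ℕ → ℝ,
    (∀ n, inXR a b c d (x n) (y n) (z n)) →
    Tendsto (fun n => (x n, y n, z n)) atTop (nhds ((0 : ℝ), (0 : ℝ), (0 : ℝ))) →
    (∀ n, gradNeR a b c d (x n) (y n) (z n)) →
    Tendsto (fun n => |x n * fxR b c d (x n) (z n) + y n * fyR a (y n)| /
        (nrm2R (x n) (y n) * gradNormR a b c d (x n) (y n) (z n)))
      atTop (nhds 0)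

/-- Whitney (b)-regularity of the pair (X, Oz) at the origin. -/
def bRegR (a b c d : ℕ) : Prop := aRegR a b c d ∧ bpiR a b c d

/-- Kuo–Verdier (w)-regularity of the pair (X, Oz) at the origin. -/
def wRegR (a b c d : ℕ) : Prop :=
  ∃ C : ℝ, 0 < C ∧ ∃ ε : ℝ, 0 < ε ∧ ∀ x y z : ℝ,
    inXR a b c d x y z → nrm3R x y z < ε → gradNeR a b c d x y z →
    |fzR b c x z| ≤ C * nrm2R x y * gradNormR a b c d x y z

/-- The test function Z'(x,z) whose boundedness near 0 characterises (w)-regularity. -/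
def Ztest (a b c d : ℕ) (x z : ℝ) : ℝ :=
  |z ^ (b - 1) * x ^ c| /
    (max |(c : ℝ) * x ^ (c - 1) * z ^ b + (d : ℝ) * x ^ (d - 1)|
        (|z ^ b * x ^ c + x ^ d| ^ (((a : ℝ) - 1) / (a : ℝ))) *
      max |x| (|z ^ b * x ^ c + x ^ d| ^ (1 / (a : ℝ))))

-- helper lemmas

lemma nrm3_ge₁ (u v w : ℝ) : |u| ≤ nrm3R u v w := by
  rw [nrm3R, ← Real.sqrt_sq_eq_abs]
  exact Real.sqrt_le_sqrt (by nlinarith [sq_nonneg v, sq_nonneg w])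
lemma nrm3_ge₂ (u v w : ℝ) : |v| ≤ nrm3R u v w := by
  rw [nrm3R, ← Real.sqrt_sq_eq_abs]
  exact Real.sqrt_le_sqrt (by nlinarith [sq_nonneg u, sq_nonneg w])
lemma nrm3_ge₃ (u v w : ℝ) : |w| ≤ nrm3R u v w := by
  rw [nrm3R, ← Real.sqrt_sq_eq_abs]
  exact Real.sqrt_le_sqrt (by nlinarith [sq_nonneg u, sq_nonneg v])
lemma nrm3_le (u v w : ℝ) : nrm3R u v w ≤ |u| + |v| + |w| := by
  rw [nrm3R]
  have h : u ^ 2 + v ^ 2 + w ^ 2 ≤ (|u| + |v| + |w|) ^ 2 := by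
    nlinarith [sq_abs u, sq_abs v, sq_abs w,
      mul_nonneg (abs_nonneg u) (abs_nonneg v), mul_nonneg (abs_nonneg u) (abs_nonneg w),
      mul_nonneg (abs_nonneg v) (abs_nonneg w)]
  calc Real.sqrt (u ^ 2 + v ^ 2 + w ^ 2) ≤ Real.sqrt ((|u| + |v| + |w|) ^ 2) :=
        Real.sqrt_le_sqrt h
    _ = |u| + |v| + |w| := by rw [Real.sqrt_sq (by positivity)]
lemma nrm2_ge₁ (u v : ℝ) : |u| ≤ nrm2R u v := by
  rw [nrm2R, ← Real.sqrt_sq_eq_abs]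
  exact Real.sqrt_le_sqrt (by nlinarith [sq_nonneg v])
lemma nrm2_ge₂ (u v : ℝ) : |v| ≤ nrm2R u v := by
  rw [nrm2R, ← Real.sqrt_sq_eq_abs]
  exact Real.sqrt_le_sqrt (by nlinarith [sq_nonneg u])
lemma nrm2_le (u v : ℝ) : nrm2R u v ≤ |u| + |v| := by
  rw [nrm2R]
  have h : u ^ 2 + v ^ 2 ≤ (|u| + |v|) ^ 2 := by
    nlinarith [mul_nonneg (abs_nonneg u) (abs_nonneg v), sq_abs u, sq_abs v]
  calc Real.sqrt (u ^ 2 + v ^ 2) ≤ Real.sqrt ((|u| + |v|) ^ 2) := Real.sqrt_le_sqrt h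
    _ = |u| + |v| := by rw [Real.sqrt_sq (by positivity)]
lemma nrm2_nonneg (u v : ℝ) : 0 ≤ nrm2R u v := Real.sqrt_nonneg _
lemma nrm3_nonneg (u v w : ℝ) : 0 ≤ nrm3R u v w := Real.sqrt_nonneg _

lemma root_abs (a : ℕ) (ha : 0 < a) (y : ℝ) : |y ^ a| ^ (1 / (a : ℝ)) = |y| := by
  have haR : (a : ℝ) ≠ 0 := Nat.cast_ne_zero.mpr ha.ne'
  rw [abs_pow, ← Real.rpow_natCast |y| a, ← Real.rpow_mul (abs_nonneg y),
    mul_one_div_cancel haR, Real.rpow_one]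
lemma root_abs' (a : ℕ) (ha : 0 < a) (y : ℝ) :
    |y ^ a| ^ (((a : ℝ) - 1) / (a : ℝ)) = |y| ^ (a - 1) := by
  have haR : (a : ℝ) ≠ 0 := Nat.cast_ne_zero.mpr ha.ne'
  rw [abs_pow, ← Real.rpow_natCast |y| a, ← Real.rpow_mul (abs_nonneg y),
    mul_div_cancel₀ _ haR]
  have : ((a : ℝ) - 1) = ((a - 1 : ℕ) : ℝ) := by rw [Nat.cast_sub ha, Nat.cast_one]
  rw [this, Real.rpow_natCast]
lemma exists_root (a : ℕ) (ha : 0 < a) (s : ℝ) (h : Odd a ∨ 0 ≤ s) : ∃ y : ℝ, y ^ a = s := by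
  rcases le_or_gt 0 s with hs | hs
  · refine ⟨s ^ (1 / (a : ℝ)), ?_⟩
    have haR : (a : ℝ) ≠ 0 := Nat.cast_ne_zero.mpr ha.ne'
    rw [← Real.rpow_natCast (s ^ (1 / (a:ℝ))) a, ← Real.rpow_mul hs,
      one_div_mul_cancel haR, Real.rpow_one]
  · rcases h with hodd | h
    · refine ⟨-(|s| ^ (1 / (a : ℝ))), ?_⟩
      have haR : (a : ℝ) ≠ 0 := Nat.cast_ne_zero.mpr ha.ne'
      rw [hodd.neg_pow, ← Real.rpow_natCast (|s| ^ (1 / (a:ℝ))) a,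
        ← Real.rpow_mul (abs_nonneg s), one_div_mul_cancel haR, Real.rpow_one,
        abs_of_neg hs, neg_neg]
    · linarith

lemma fz_abs (b c : ℕ) (x z : ℝ) : |fzR b c x z| = (b : ℝ) * |z ^ (b - 1) * x ^ c| := by
  have h1 : fzR b c x z = -((b : ℝ) * (z ^ (b - 1) * x ^ c)) := by simp only [fzR]; ring
  rw [h1, abs_neg, abs_mul, Nat.abs_cast]

lemma fx_abs (b c d : ℕ) (x z : ℝ) :
    |(c : ℝ) * x ^ (c - 1) * z ^ b + (d : ℝ) * x ^ (d - 1)| = |fxR b c d x z| := by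
  have h1 : fxR b c d x z = -((c : ℝ) * x ^ (c - 1) * z ^ b + (d : ℝ) * x ^ (d - 1)) := by
    simp only [fxR]; ring
  rw [h1, abs_neg]

lemma fy_abs (a : ℕ) (y : ℝ) : |fyR a y| = (a : ℝ) * |y| ^ (a - 1) := by
  simp only [fyR, abs_mul, Nat.abs_cast, abs_pow]


set_option maxHeartbeats 2000000

/-- (w)-regularity of (X, Oz) at the origin is equivalent to boundedness of Z' near 0. -/
theorem w_regular_iff_Ztest_bounded (a b c d : ℕ)
    (ha : 0 < a) (hb : 0 < b) (hc : 0 < c) (hd : 0 < d) :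
    wRegR a b c d ↔
      ∃ M : ℝ, 0 < M ∧ ∃ ε : ℝ, 0 < ε ∧ ∀ x z : ℝ, x ≠ 0 →
        (Odd a ∨ 0 ≤ z ^ b * x ^ c + x ^ d) →
        Real.sqrt (x ^ 2 + z ^ 2) < ε → Ztest a b c d x z ≤ M := by
  have haR : (a : ℝ) ≠ 0 := Nat.cast_ne_zero.mpr ha.ne'
  constructor
  · rintro ⟨C, hC, ε, hε, hw⟩
    set ε' : ℝ := min ε (min 1 (1 / (4 * C))) with hε'def
    have hε'pos : 0 < ε' := lt_min hε (lt_min one_pos (by positivity))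
    have hε'ε : ε' ≤ ε := min_le_left _ _
    have hε'1 : ε' ≤ 1 := le_trans (min_le_right _ _) (min_le_left _ _)
    have hε'C : ε' ≤ 1 / (4 * C) := le_trans (min_le_right _ _) (min_le_right _ _)
    set e : ℝ := ε' / 2 with hedef
    have he : 0 < e := by positivity
    have he1 : e ≤ 1 / 2 := by simp only [hedef]; linarith
    have hpow : e ^ a ≤ e := by
      calc e ^ a ≤ e ^ 1 := pow_le_pow_of_le_one he.le (by linarith) ha
        _ = e := pow_one e
    refine ⟨4 * C * ((a : ℝ) + 1), by positivity, e ^ a / 2, by positivity, ?_⟩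
    intro x z hx hroot hxz
    obtain ⟨y, hy⟩ := exists_root a ha (z ^ b * x ^ c + x ^ d) hroot
    have hZeq : Ztest a b c d x z =
        |z ^ (b - 1) * x ^ c| /
          (max |fxR b c d x z| (|y| ^ (a - 1)) * max |x| |y|) := by
      simp only [Ztest, ← hy, root_abs a ha y, root_abs' a ha y, fx_abs]
    have hxz' : nrm2R x z < e ^ a / 2 := hxz
    have hxδ : |x| < e ^ a / 2 := lt_of_le_of_lt (nrm2_ge₁ x z) hxz'
    have hzδ : |z| < e ^ a / 2 := lt_of_le_of_lt (nrm2_ge₂ x z) hxz'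
    have hx1 : |x| ≤ 1 := by nlinarith
    have hz1 : |z| ≤ 1 := by nlinarith
    have hsabs : |z ^ b * x ^ c + x ^ d| ≤ e ^ a := by
      have h1 : |z ^ b * x ^ c + x ^ d| ≤ |z| ^ b * |x| ^ c + |x| ^ d := by
        calc |z ^ b * x ^ c + x ^ d| ≤ |z ^ b * x ^ c| + |x ^ d| := abs_add_le _ _
          _ = |z| ^ b * |x| ^ c + |x| ^ d := by rw [abs_mul, abs_pow, abs_pow, abs_pow]
      have h2 : |z| ^ b ≤ 1 := pow_le_one₀ (abs_nonneg z) hz1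
      have h3 : |x| ^ c ≤ |x| := by
        calc |x| ^ c ≤ |x| ^ 1 := pow_le_pow_of_le_one (abs_nonneg x) hx1 hc
          _ = |x| := pow_one _
      have h4 : |x| ^ d ≤ |x| := by
        calc |x| ^ d ≤ |x| ^ 1 := pow_le_pow_of_le_one (abs_nonneg x) hx1 hd
          _ = |x| := pow_one _
      have h5 : |z| ^ b * |x| ^ c ≤ |x| := by
        calc |z| ^ b * |x| ^ c ≤ 1 * |x| ^ c :=
              mul_le_mul_of_nonneg_right h2 (by positivity)
          _ = |x| ^ c := one_mul _
          _ ≤ |x| := h3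
      linarith
    have hyle : |y| ≤ e := by
      have h6 : |z ^ b * x ^ c + x ^ d| ^ (1 / (a : ℝ)) = |y| := by
        rw [← hy]; exact root_abs a ha y
      rw [← h6]
      calc |z ^ b * x ^ c + x ^ d| ^ (1 / (a : ℝ)) ≤ (e ^ a) ^ (1 / (a : ℝ)) :=
            Real.rpow_le_rpow (abs_nonneg _) hsabs (by positivity)
        _ = e := by
            rw [← Real.rpow_natCast e a, ← Real.rpow_mul he.le,
              mul_one_div_cancel haR, Real.rpow_one]
    have hn3 : nrm3R x y z < ε' := by
      have h7 := nrm3_le x y z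
      have : |x| + |y| + |z| < e ^ a + e := by linarith
      calc nrm3R x y z ≤ |x| + |y| + |z| := h7
        _ < e ^ a + e := this
        _ ≤ e + e := by linarith
        _ = ε' := by simp only [hedef]; ring
    by_cases hgr : gradNeR a b c d x y z
    · have key := hw x y z ⟨hy, fun h => hx h.1⟩ (lt_of_lt_of_le hn3 hε'ε) hgr
      set D1 : ℝ := max |fxR b c d x z| (|y| ^ (a - 1)) with hD1def
      set m : ℝ := max |x| |y| with hmdef
      have hD1nn : 0 ≤ D1 := le_trans (abs_nonneg _) (le_max_left _ _)
      have hmnn : 0 ≤ m := le_trans (abs_nonneg _) (le_max_left _ _)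
      have hmlt : m ≤ 1 / (4 * C) := by
        apply max_le
        · exact le_trans (le_trans (nrm3_ge₁ x y z) hn3.le) hε'C
        · exact le_trans (le_trans (nrm3_ge₂ x y z) hn3.le) hε'C
      have hgrle : gradNormR a b c d x y z ≤ (1 + (a : ℝ)) * D1 + |fzR b c x z| := by
        have h8 : gradNormR a b c d x y z ≤
            |fxR b c d x z| + |fyR a y| + |fzR b c x z| :=
          nrm3_le (fxR b c d x z) (fyR a y) (fzR b c x z)
        have h9 : |fxR b c d x z| ≤ D1 := le_max_left _ _
        have h10 : |fyR a y| ≤ (a : ℝ) * D1 := by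
          rw [fy_abs]
          exact mul_le_mul_of_nonneg_left (le_max_right _ _) (Nat.cast_nonneg a)
        linarith
      have hn2le : nrm2R x y ≤ 2 * m := by
        have := nrm2_le x y
        have h11 : |x| ≤ m := le_max_left _ _
        have h12 : |y| ≤ m := le_max_right _ _
        linarith
      have h13 : |fzR b c x z| ≤ C * (2 * m) * ((1 + (a : ℝ)) * D1 + |fzR b c x z|) := by
        calc |fzR b c x z| ≤ C * nrm2R x y * gradNormR a b c d x y z := key
          _ ≤ C * (2 * m) * gradNormR a b c d x y z := by
              apply mul_le_mul_of_nonneg_right _ (nrm3_nonneg _ _ _)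
              exact mul_le_mul_of_nonneg_left hn2le hC.le
          _ ≤ C * (2 * m) * ((1 + (a : ℝ)) * D1 + |fzR b c x z|) := by
              apply mul_le_mul_of_nonneg_left hgrle (by positivity)
      have hhalf : C * (2 * m) * |fzR b c x z| ≤ (1 / 2) * |fzR b c x z| := by
        apply mul_le_mul_of_nonneg_right _ (abs_nonneg _)
        calc C * (2 * m) = 2 * C * m := by ring
          _ ≤ 2 * C * (1 / (4 * C)) := mul_le_mul_of_nonneg_left hmlt (by positivity)
          _ = 1 / 2 := by field_simp; ring
      have hexp : C * (2 * m) * ((1 + (a : ℝ)) * D1 + |fzR b c x z|) =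
          2 * C * (1 + (a : ℝ)) * (m * D1) + C * (2 * m) * |fzR b c x z| := by ring
      have hCmD : 0 ≤ 2 * C * (1 + (a : ℝ)) * (m * D1) := by positivity
      have h14 : |fzR b c x z| ≤ 4 * C * (1 + (a : ℝ)) * (m * D1) := by
        rw [hexp] at h13; linarith
      have hNle : |z ^ (b - 1) * x ^ c| ≤ |fzR b c x z| := by
        rw [fz_abs]
        have hb1 : (1 : ℝ) ≤ (b : ℝ) := by exact_mod_cast hb
        exact le_mul_of_one_le_left (abs_nonneg _) hb1
      rw [hZeq]
      apply div_le_of_le_mul₀ (by positivity) (by positivity)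
      calc |z ^ (b - 1) * x ^ c| ≤ 4 * C * (1 + (a : ℝ)) * (m * D1) := le_trans hNle h14
        _ = 4 * C * ((a : ℝ) + 1) * (D1 * m) := by ring
    · have h0 : fzR b c x z = 0 := (not_not.mp hgr).2.2
      have h1 : |z ^ (b - 1) * x ^ c| = 0 := by
        have := fz_abs b c x z
        rw [h0, abs_zero] at this
        have hbpos : (0 : ℝ) < (b : ℝ) := by exact_mod_cast hb
        have h2 := abs_nonneg (z ^ (b - 1) * x ^ c)
        nlinarith
      rw [hZeq, h1, zero_div]
      positivity
  · rintro ⟨M, hM, ε, hε, hB⟩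
    refine ⟨(b : ℝ) * M, by positivity, min ε 1, lt_min hε one_pos, ?_⟩
    intro x y z hin hn3 hgr
    obtain ⟨heq, hxy⟩ := hin
    have hx : x ≠ 0 := by
      intro h0
      apply hxy
      refine ⟨h0, ?_⟩
      have hy0 : y ^ a = 0 := by
        rw [heq, h0, zero_pow hc.ne', zero_pow hd.ne', mul_zero, add_zero]
      exact pow_eq_zero_iff ha.ne' |>.mp hy0
    have hroot : Odd a ∨ 0 ≤ z ^ b * x ^ c + x ^ d := by
      rcases Nat.even_or_odd a with he | ho
      · right; rw [← heq]; exact he.pow_nonneg y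
      · left; exact ho
    have h2 : Real.sqrt (x ^ 2 + z ^ 2) < ε := by
      have h3 : nrm2R x z ≤ nrm3R x y z := by
        rw [nrm2R, nrm3R]
        exact Real.sqrt_le_sqrt (by nlinarith [sq_nonneg y])
      exact lt_of_le_of_lt h3 (lt_of_lt_of_le hn3 (min_le_left _ _))
    have hZ := hB x z hx hroot h2
    have hZeq : Ztest a b c d x z =
        |z ^ (b - 1) * x ^ c| /
          (max |fxR b c d x z| (|y| ^ (a - 1)) * max |x| |y|) := by
      simp only [Ztest, ← heq, root_abs a ha y, root_abs' a ha y, fx_abs]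
    set D1 : ℝ := max |fxR b c d x z| (|y| ^ (a - 1)) with hD1def
    set m : ℝ := max |x| |y| with hmdef
    have hmpos : 0 < m := lt_of_lt_of_le (abs_pos.mpr hx) (le_max_left _ _)
    have hD1pos : 0 < D1 := by
      rcases lt_or_eq_of_le (le_trans (abs_nonneg (fxR b c d x z)) (le_max_left _ _)) with h | h
      · exact h
      exfalso
      have hfx0 : fxR b c d x z = 0 :=
        abs_eq_zero.mp (le_antisymm (h ▸ le_max_left _ _) (abs_nonneg _))
      have hy0pow : |y| ^ (a - 1) = 0 :=
        le_antisymm (h ▸ le_max_right _ _) (by positivity)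
      have ha2 : 2 ≤ a := by
        by_contra hlt
        push_neg at hlt
        interval_cases a
        · simp at hy0pow
      have hy0 : y = 0 := by
        have h4 : |y| = 0 := pow_eq_zero_iff (by omega) |>.mp hy0pow
        exact abs_eq_zero.mp h4
      have heq0 : z ^ b * x ^ c + x ^ d = 0 := by
        rw [← heq, hy0, zero_pow ha.ne']
      have hfx0' : (c : ℝ) * z ^ b * x ^ (c - 1) + (d : ℝ) * x ^ (d - 1) = 0 := by
        simp only [fxR] at hfx0; linarith
      have hxc : x ^ (c - 1) * x = x ^ c := by rw [← pow_succ, Nat.sub_add_cancel hc]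
      have hxd : x ^ (d - 1) * x = x ^ d := by rw [← pow_succ, Nat.sub_add_cancel hd]
      have hmul : (c : ℝ) * (z ^ b * x ^ c) + (d : ℝ) * x ^ d = 0 := by
        have h5 : ((c : ℝ) * z ^ b * x ^ (c - 1) + (d : ℝ) * x ^ (d - 1)) * x =
            (c : ℝ) * (z ^ b * (x ^ (c - 1) * x)) + (d : ℝ) * (x ^ (d - 1) * x) := by ring
        rw [hxc, hxd] at h5
        rw [← h5, hfx0', zero_mul]
      have hzx : z ^ b * x ^ c = -x ^ d := by linarith
      have hxd0 : x ^ d ≠ 0 := pow_ne_zero d hx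
      have hcd : c = d := by
        rw [hzx] at hmul
        have h6 : ((d : ℝ) - (c : ℝ)) * x ^ d = 0 := by linarith
        rcases mul_eq_zero.mp h6 with h7 | h7
        · have : (c : ℝ) = (d : ℝ) := by linarith
          exact_mod_cast this
        · exact absurd h7 hxd0
      have hzb : z ^ b = -1 := by
        rw [hcd] at hzx
        have h8 : z ^ b * x ^ d = (-1) * x ^ d := by rw [hzx]; ring
        exact mul_right_cancel₀ hxd0 h8
      have hz1 : |z| < 1 :=
        lt_of_le_of_lt (nrm3_ge₃ x y z) (lt_of_lt_of_le hn3 (min_le_right _ _))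
      have hone : |z| ^ b = 1 := by rw [← abs_pow, hzb]; simp
      have hlt : |z| ^ b < 1 := by
        calc |z| ^ b ≤ |z| ^ 1 := pow_le_pow_of_le_one (abs_nonneg z) hz1.le hb
          _ = |z| := pow_one _
          _ < 1 := hz1
      linarith
    rw [hZeq] at hZ
    have hprod : 0 < D1 * m := mul_pos hD1pos hmpos
    have hN : |z ^ (b - 1) * x ^ c| ≤ M * (D1 * m) := (div_le_iff₀ hprod).mp hZ
    have hD1le : D1 ≤ gradNormR a b c d x y z := by
      apply max_le
      · exact nrm3_ge₁ (fxR b c d x z) (fyR a y) (fzR b c x z)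
      · calc |y| ^ (a - 1) ≤ (a : ℝ) * |y| ^ (a - 1) := by
              have ha1 : (1 : ℝ) ≤ (a : ℝ) := by exact_mod_cast ha
              nlinarith [pow_nonneg (abs_nonneg y) (a - 1)]
          _ = |fyR a y| := (fy_abs a y).symm
          _ ≤ gradNormR a b c d x y z := nrm3_ge₂ (fxR b c d x z) (fyR a y) (fzR b c x z)
    have hmle : m ≤ nrm2R x y := max_le (nrm2_ge₁ x y) (nrm2_ge₂ x y)
    have hDm : D1 * m ≤ nrm2R x y * gradNormR a b c d x y z := by
      calc D1 * m ≤ gradNormR a b c d x y z * nrm2R x y :=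
            mul_le_mul hD1le hmle hmpos.le (nrm3_nonneg _ _ _)
        _ = nrm2R x y * gradNormR a b c d x y z := mul_comm _ _
    calc |fzR b c x z| = (b : ℝ) * |z ^ (b - 1) * x ^ c| := fz_abs b c x z
      _ ≤ (b : ℝ) * (M * (D1 * m)) :=
          mul_le_mul_of_nonneg_left hN (Nat.cast_nonneg b)
      _ ≤ (b : ℝ) * (M * (nrm2R x y * gradNormR a b c d x y z)) := by
          apply mul_le_mul_of_nonneg_left _ (Nat.cast_nonneg b)
          exact mul_le_mul_of_nonneg_left hDm hM.le
      _ = (b : ℝ) * M * nrm2R x y * gradNormR a b c d x y z := by ring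

end
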